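/- Let G be an E-free graph with no K_4 subgraph and let Q = v_1 v_2 v_3 v_4 v_5 v_1 be an induced 5-cycle in G which is a smallest induced odd cycle of G. Then for every index i, at least one of the sets A_i' and A_{i+1}' is empty; consequently at most two of the sets A_1', ..., A_5' are nonempty. -/
import Mathlib


/-- `H` is contained in `G` as an induced subgraph. -/
def ContainsInduced {α β : Type*} (H : SimpleGraph α) (G : SimpleGraph β) : Prop :=
  ∃ f : α ↪ β, ∀ a b, G.Adj (f a) (f b) ↔ H.Adj a b

/-- The graph `E = S_{1,2,2}`: centre `0`, leaf `1`, and the paths `0 2 3` and `0 4 5`. -/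
def graphE : SimpleGraph (Fin 6) :=
  SimpleGraph.fromRel (fun a b =>
    ((a : ℕ), (b : ℕ)) ∈ [(0, 1), (0, 2), (2, 3), (0, 4), (4, 5)])

/-- `u : ZMod k → V` lists the vertices (in cyclic order) of an induced cycle of
length `k` in `G`. -/
def IsInducedCycle {V : Type*} (G : SimpleGraph V) {k : ℕ} (u : ZMod k → V) : Prop :=
  Function.Injective u ∧ ∀ i j : ZMod k, G.Adj (u i) (u j) ↔ (j = i + 1 ∨ i = j + 1)

/-- `v : ZMod p → V` is a smallest induced odd cycle of `G` of length `p ≥ 5`: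
an induced odd cycle of length `p ≥ 5` such that `G` has no induced odd cycle of
length `k` with `5 ≤ k < p`. -/
def IsSmallestInducedOddCycle {V : Type*} (G : SimpleGraph V) {p : ℕ}
    (v : ZMod p → V) : Prop :=
  5 ≤ p ∧ Odd p ∧ IsInducedCycle G v ∧
    ∀ k : ℕ, 5 ≤ k → k < p → Odd k → ∀ u : ZMod k → V, ¬ IsInducedCycle G u

/-- `A_i`: the vertices outside the cycle `Q` whose neighbourhood on `Q` is
exactly `{v_i}`. -/
def setA {V : Type*} (G : SimpleGraph V) {p : ℕ} (v : ZMod p → V) (i : ZMod p) :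
    Set V :=
  {w | w ∉ Set.range v ∧ ∀ j : ZMod p, G.Adj w (v j) ↔ j = i}

/-- `B_i`: the vertices outside the cycle `Q` whose neighbourhood on `Q` is
exactly `{v_i, v_{i+2}}`. -/
def setB {V : Type*} (G : SimpleGraph V) {p : ℕ} (v : ZMod p → V) (i : ZMod p) :
    Set V :=
  {w | w ∉ Set.range v ∧ ∀ j : ZMod p, G.Adj w (v j) ↔ (j = i ∨ j = i + 2)}

/-- `C_i`: the vertices outside the cycle `Q` whose neighbourhood on `Q` is
exactly `{v_i, v_{i+1}, v_{i+2}}`. -/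
def setC {V : Type*} (G : SimpleGraph V) {p : ℕ} (v : ZMod p → V) (i : ZMod p) :
    Set V :=
  {w | w ∉ Set.range v ∧ ∀ j : ZMod p, G.Adj w (v j) ↔ (j = i ∨ j = i + 1 ∨ j = i + 2)}

/-- `D_i`: the vertices outside the cycle `Q` whose neighbourhood on `Q` is
exactly `{v_i, v_{i+1}, v_{i+2}, v_{i+3}}`. -/
def setD {V : Type*} (G : SimpleGraph V) {p : ℕ} (v : ZMod p → V) (i : ZMod p) :
    Set V :=
  {w | w ∉ Set.range v ∧
    ∀ j : ZMod p, G.Adj w (v j) ↔ (j = i ∨ j = i + 1 ∨ j = i + 2 ∨ j = i + 3)}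

/-- `A_i'`: the vertices of `A_i` having a neighbour in `A_i`. -/
def setA' {V : Type*} (G : SimpleGraph V) {p : ℕ} (v : ZMod p → V) (i : ZMod p) :
    Set V :=
  {w ∈ setA G v i | ∃ w' ∈ setA G v i, G.Adj w w'}


instance : DecidableRel graphE.Adj := fun a b =>
  decidable_of_iff _ (SimpleGraph.fromRel_adj _ a b).symm

/-- Key lemma: any vertex of `A_i` is adjacent to any vertex of `A_{i+1}`;
otherwise the path `y v_{i+1} v_i v_{i+4} v_{i+3}` plus the pendant `x` at `v_i`
is an induced `E`. -/
lemma key_adj {V : Type*} (G : SimpleGraph V)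
    (hE : ¬ ContainsInduced graphE G)
    (v : ZMod 5 → V) (hC : IsInducedCycle G v)
    (i : ZMod 5) {x y : V} (hx : x ∈ setA G v i) (hy : y ∈ setA G v (i + 1)) :
    G.Adj x y := by
  by_contra hxy
  obtain ⟨hxr, hxa⟩ := hx
  obtain ⟨hyr, hya⟩ := hy
  obtain ⟨hvinj, hvadj⟩ := hC
  have hxa' : ∀ a : ZMod 5, G.Adj x (v (i + a)) ↔ a = 0 := fun a =>
    (hxa (i + a)).trans ⟨fun h => add_left_cancel (h.trans (add_zero i).symm),
      fun h => by rw [h, add_zero]⟩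
  have hya' : ∀ a : ZMod 5, G.Adj y (v (i + a)) ↔ a = 1 := fun a =>
    (hya (i + a)).trans ⟨fun h => add_left_cancel h, fun h => by rw [h]⟩
  have hvadj' : ∀ a b : ZMod 5,
      G.Adj (v (i + a)) (v (i + b)) ↔ (b = a + 1 ∨ a = b + 1) := by
    intro a b
    rw [hvadj (i + a) (i + b)]
    constructor
    · rintro (h | h)
      · exact Or.inl (add_left_cancel (by rwa [add_assoc] at h))
      · exact Or.inr (add_left_cancel (by rwa [add_assoc] at h))
    · rintro (h | h)
      · exact Or.inl (by rw [add_assoc, h])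
      · exact Or.inr (by rw [add_assoc, h])
  -- the six vertices of the induced `E`
  have hxv : ∀ j, x ≠ v j := fun j h => hxr ⟨j, h.symm⟩
  have hyv : ∀ j, y ≠ v j := fun j h => hyr ⟨j, h.symm⟩
  have hxy' : x ≠ y := by
    intro h
    have h1 := (hxa' 0).mpr rfl
    rw [h, hya' 0] at h1
    exact absurd h1 (by decide)
  have hvv : ∀ a b : ZMod 5, a ≠ b → v (i + a) ≠ v (i + b) :=
    fun a b hab h => hab (add_left_cancel (hvinj h))
  -- edges
  have E01 : G.Adj (v (i + 0)) x := ((hxa' 0).mpr rfl).symm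
  have E02 : G.Adj (v (i + 0)) (v (i + 1)) := (hvadj' 0 1).mpr (Or.inl (by decide))
  have E23 : G.Adj (v (i + 1)) y := ((hya' 1).mpr rfl).symm
  have E04 : G.Adj (v (i + 0)) (v (i + 4)) := (hvadj' 0 4).mpr (Or.inr (by decide))
  have E45 : G.Adj (v (i + 4)) (v (i + 3)) := (hvadj' 4 3).mpr (Or.inr (by decide))
  -- non-edges
  have N03 : ¬ G.Adj (v (i + 0)) y := fun h => absurd ((hya' 0).mp h.symm) (by decide)
  have N05 : ¬ G.Adj (v (i + 0)) (v (i + 3)) := fun h => absurd ((hvadj' 0 3).mp h) (by decide)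
  have N12 : ¬ G.Adj x (v (i + 1)) := fun h => absurd ((hxa' 1).mp h) (by decide)
  have N13 : ¬ G.Adj x y := hxy
  have N14 : ¬ G.Adj x (v (i + 4)) := fun h => absurd ((hxa' 4).mp h) (by decide)
  have N15 : ¬ G.Adj x (v (i + 3)) := fun h => absurd ((hxa' 3).mp h) (by decide)
  have N24 : ¬ G.Adj (v (i + 1)) (v (i + 4)) := fun h => absurd ((hvadj' 1 4).mp h) (by decide)
  have N25 : ¬ G.Adj (v (i + 1)) (v (i + 3)) := fun h => absurd ((hvadj' 1 3).mp h) (by decide)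
  have N34 : ¬ G.Adj y (v (i + 4)) := fun h => absurd ((hya' 4).mp h) (by decide)
  have N35 : ¬ G.Adj y (v (i + 3)) := fun h => absurd ((hya' 3).mp h) (by decide)
  apply hE
  refine ⟨⟨![v (i + 0), x, v (i + 1), y, v (i + 4), v (i + 3)], ?_⟩, ?_⟩
  · intro a b hab
    fin_cases a <;> fin_cases b <;> simp only [Matrix.cons_val_zero, Matrix.cons_val_one,
      Matrix.head_cons, Matrix.cons_val_succ, Fin.mk_zero, Fin.mk_one,
      Function.Embedding.coeFn_mk] at hab <;>
      first
        | rfl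
        | exact absurd hab (hxv _)
        | exact absurd hab.symm (hxv _)
        | exact absurd hab (hyv _)
        | exact absurd hab.symm (hyv _)
        | exact absurd hab hxy'
        | exact absurd hab.symm hxy'
        | exact absurd hab (hvv _ _ (by decide))
  · intro a b
    fin_cases a <;> fin_cases b <;>
      simp only [Matrix.cons_val_zero, Matrix.cons_val_one, Matrix.head_cons,
        Matrix.cons_val_succ, Fin.mk_zero, Fin.mk_one, Function.Embedding.coeFn_mk] <;>
      first
      | exact iff_of_true
          (by first
          | exact E01
          | exact E01.symm
          | exact E02
          | exact E02.symm
          | exact E23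
          | exact E23.symm
          | exact E04
          | exact E04.symm
          | exact E45
          | exact E45.symm)
          (by decide)
      | exact iff_of_false
          (by first
          | exact G.irrefl
          | exact N03
          | exact fun h => N03 h.symm
          | exact N05
          | exact fun h => N05 h.symm
          | exact N12
          | exact fun h => N12 h.symm
          | exact N13
          | exact fun h => N13 h.symm
          | exact N14
          | exact fun h => N14 h.symm
          | exact N15
          | exact fun h => N15 h.symm
          | exact N24
          | exact fun h => N24 h.symm
          | exact N25
          | exact fun h => N25 h.symm
          | exact N34
          | exact fun h => N34 h.symm
          | exact N35
          | exact fun h => N35 h.symm)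
          (by decide)

lemma tri_zmod5' : ∀ a b c : ZMod 5, a = b ∨ a = c ∨ b = c ∨
    a + 1 = b ∨ a + 1 = c ∨ b + 1 = a ∨ b + 1 = c ∨ c + 1 = a ∨ c + 1 = b := by decide

lemma tri_zmod5 (a b c : ZMod 5) (h1 : a ≠ b) (h2 : a ≠ c) (h3 : b ≠ c) :
    a + 1 = b ∨ a + 1 = c ∨ b + 1 = a ∨ b + 1 = c ∨ c + 1 = a ∨ c + 1 = b := by
  rcases tri_zmod5' a b c with h | h | h | h
  exacts [absurd h h1, absurd h h2, absurd h h3, h]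

/-- Let `G` be an `E`-free graph with no `K_4` subgraph and let `Q = v_1 … v_5 v_1` be
an induced 5-cycle of `G` which is a smallest induced odd cycle of `G`.  Then for every
index `i` at least one of `A_i'` and `A_{i+1}'` is empty; consequently at most two of
the sets `A_1', …, A_5'` are nonempty. -/
theorem setA'_nonempty_at_most_two {V : Type*} [Fintype V] (G : SimpleGraph V)
    (hE : ¬ ContainsInduced graphE G) (hK4 : G.CliqueFree 4)
    (v : ZMod 5 → V) (hQ : IsSmallestInducedOddCycle G v) :
    (∀ i : ZMod 5, setA' G v i = ∅ ∨ setA' G v (i + 1) = ∅) ∧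
    {i : ZMod 5 | (setA' G v i).Nonempty}.ncard ≤ 2 := by
  classical
  obtain ⟨-, -, hC, -⟩ := hQ
  have main : ∀ i : ZMod 5, setA' G v i = ∅ ∨ setA' G v (i + 1) = ∅ := by
    intro i
    by_contra h
    push_neg at h
    obtain ⟨h1, h2⟩ := h
    obtain ⟨a, ha, a', ha', haa⟩ := h1
    obtain ⟨b, hb, b', hb', hbb⟩ := h2
    have e1 : G.Adj a b := key_adj G hE v hC i ha hb
    have e2 : G.Adj a b' := key_adj G hE v hC i ha hb'
    have e3 : G.Adj a' b := key_adj G hE v hC i ha' hb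
    have e4 : G.Adj a' b' := key_adj G hE v hC i ha' hb'
    have c1 : G.IsNClique 1 {b'} := SimpleGraph.isNClique_singleton.mpr rfl
    have c2 : G.IsNClique 2 (insert b {b'}) := c1.insert (by
      intro c hc; rw [Finset.mem_singleton] at hc; rw [hc]; exact hbb)
    have c3 : G.IsNClique 3 (insert a' (insert b {b'})) := c2.insert (by
      intro c hc
      rcases Finset.mem_insert.mp hc with h | h
      · rw [h]; exact e3
      · rw [Finset.mem_singleton] at h; rw [h]; exact e4)
    have c4 : G.IsNClique 4 (insert a (insert a' (insert b {b'}))) := c3.insert (by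
      intro c hc
      rcases Finset.mem_insert.mp hc with h | h
      · rw [h]; exact haa
      rcases Finset.mem_insert.mp h with h | h
      · rw [h]; exact e1
      · rw [Finset.mem_singleton] at h; rw [h]; exact e2)
    exact hK4 _ c4
  refine ⟨main, ?_⟩
  by_contra h
  push_neg at h
  rw [Set.two_lt_ncard (Set.toFinite _)] at h
  obtain ⟨a, ha, b, hb, c, hc, hab, hac, hbc⟩ := h
  have hstep : ∀ j : ZMod 5, (setA' G v j).Nonempty → ¬ (setA' G v (j + 1)).Nonempty := by
    intro j hj hj1
    rcases main j with h' | h'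
    · exact hj.ne_empty h'
    · exact hj1.ne_empty h'
  rcases tri_zmod5 a b c hab hac hbc with h' | h' | h' | h' | h' | h' <;>
    [ exact hstep a ha (h' ▸ hb); exact hstep a ha (h' ▸ hc); exact hstep b hb (h' ▸ ha);
      exact hstep b hb (h' ▸ hc); exact hstep c hc (h' ▸ ha); exact hstep c hc (h' ▸ hb) ]
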